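/- If C is a regular Mal'tsev category, then the category Grpd(C) of internal groupoids in C is closed under regular quotients in the category RG(C) of reflexive graphs: if (f0, f1) is a regular epimorphism of reflexive graphs (both f0 and f1 regular epimorphisms in C) whose domain underlies an internal groupoid, then its codomain also underlies an internal groupoid. -/

import Mathlib

open CategoryTheory CategoryTheory.Limits

universe v u v' u'

variable {C : Type u} [Category.{v} C]

/-- An internal relation on an object `X`: a pair of jointly monic morphisms. -/
structure RelOn (X : C) where
  R : C
  r1 : R ⟶ X
  r2 : R ⟶ X
  jmono : ∀ {Z : C} (f g : Z ⟶ R), f ≫ r1 = g ≫ r1 → f ≫ r2 = g ≫ r2 → f = g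

namespace RelOn

variable {X : C} (ρ : RelOn X)

def Reflexive : Prop :=
  ∃ δ : X ⟶ ρ.R, δ ≫ ρ.r1 = 𝟙 X ∧ δ ≫ ρ.r2 = 𝟙 X

def Symmetric : Prop :=
  ∃ σ : ρ.R ⟶ ρ.R, σ ≫ ρ.r1 = ρ.r2 ∧ σ ≫ ρ.r2 = ρ.r1

/-- Transitivity, formulated with generalized elements. -/
def Transitive : Prop :=
  ∀ {Z : C} (a b : Z ⟶ ρ.R), a ≫ ρ.r2 = b ≫ ρ.r1 →
    ∃ t : Z ⟶ ρ.R, t ≫ ρ.r1 = a ≫ ρ.r1 ∧ t ≫ ρ.r2 = b ≫ ρ.r2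

def IsEquivalence : Prop := ρ.Reflexive ∧ ρ.Symmetric ∧ ρ.Transitive

/-- The relation is effective: it is the kernel pair of some morphism. -/
def Effective : Prop :=
  ∃ (Y : C) (f : X ⟶ Y) (h : ρ.r1 ≫ f = ρ.r2 ≫ f),
    Nonempty (IsLimit (PullbackCone.mk ρ.r1 ρ.r2 h))

end RelOn

/-- A Mal'tsev category: every internal reflexive relation is an equivalence relation. -/
class MaltsevCat (C : Type u) [Category.{v} C] : Prop where
  refl_is_equiv : ∀ {X : C} (ρ : RelOn X), ρ.Reflexive → ρ.Symmetric ∧ ρ.Transitive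

/-- A regular category: finitely complete, coequalizers of kernel pairs,
pullback-stable regular epimorphisms. -/
class RegularCat (C : Type u) [Category.{v} C] : Prop where
  hasFiniteLimits : HasFiniteLimits C
  hasCoeqOfKernelPair : ∀ {A B R : C} (f : A ⟶ B) (p1 p2 : R ⟶ A) (h : p1 ≫ f = p2 ≫ f),
    Nonempty (IsLimit (PullbackCone.mk p1 p2 h)) → HasCoequalizer p1 p2
  regEpiStable : ∀ {P A B Z : C} (f : A ⟶ B) (g : Z ⟶ B) (p1 : P ⟶ A) (p2 : P ⟶ Z)
    (h : p1 ≫ f = p2 ≫ g), Nonempty (IsLimit (PullbackCone.mk p1 p2 h)) →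
    Nonempty (RegularEpi f) → Nonempty (RegularEpi p2)

/-- A Barr-exact category: regular and every equivalence relation is effective. -/
class ExactCat (C : Type u) [Category.{v} C] extends RegularCat C : Prop where
  effective : ∀ {X : C} (ρ : RelOn X), ρ.IsEquivalence → ρ.Effective

/-- An internal reflexive graph. -/
structure ReflexiveGraph (C : Type u) [Category.{v} C] where
  C1 : C
  C0 : C
  d : C1 ⟶ C0
  c : C1 ⟶ C0
  e : C0 ⟶ C1
  ed : e ≫ d = 𝟙 C0
  ec : e ≫ c = 𝟙 C0

/-- An internal category structure on a reflexive graph, formulated via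
generalized elements (equivalent to the usual pullback formulation in a
finitely complete category). `comp a b _` is the composite "`a` followed by `b`". -/
structure CatStruct {C : Type u} [Category.{v} C] (G : ReflexiveGraph C) where
  comp : ∀ {Z : C} (a b : Z ⟶ G.C1), a ≫ G.c = b ≫ G.d → (Z ⟶ G.C1)
  comp_natural : ∀ {W Z : C} (w : W ⟶ Z) (a b : Z ⟶ G.C1) (h : a ≫ G.c = b ≫ G.d)
      (h' : (w ≫ a) ≫ G.c = (w ≫ b) ≫ G.d),
      w ≫ comp a b h = comp (w ≫ a) (w ≫ b) h'
  comp_d : ∀ {Z : C} (a b : Z ⟶ G.C1) (h : a ≫ G.c = b ≫ G.d), comp a b h ≫ G.d = a ≫ G.d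
  comp_c : ∀ {Z : C} (a b : Z ⟶ G.C1) (h : a ≫ G.c = b ≫ G.d), comp a b h ≫ G.c = b ≫ G.c
  comp_unit_l : ∀ {Z : C} (a : Z ⟶ G.C1) (h : (a ≫ G.d ≫ G.e) ≫ G.c = a ≫ G.d),
      comp (a ≫ G.d ≫ G.e) a h = a
  comp_unit_r : ∀ {Z : C} (a : Z ⟶ G.C1) (h : a ≫ G.c = (a ≫ G.c ≫ G.e) ≫ G.d),
      comp a (a ≫ G.c ≫ G.e) h = a
  comp_assoc : ∀ {Z : C} (a b c' : Z ⟶ G.C1) (h1 : a ≫ G.c = b ≫ G.d)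
      (h2 : b ≫ G.c = c' ≫ G.d)
      (h3 : comp a b h1 ≫ G.c = c' ≫ G.d)
      (h4 : a ≫ G.c = comp b c' h2 ≫ G.d),
      comp (comp a b h1) c' h3 = comp a (comp b c' h2) h4

/-- The internal category has inverses, i.e. is an internal groupoid. -/
def CatStruct.HasInverses {C : Type u} [Category.{v} C] {G : ReflexiveGraph C}
    (S : CatStruct G) : Prop :=
  ∃ i : G.C1 ⟶ G.C1, i ≫ G.d = G.c ∧ i ≫ G.c = G.d ∧
    (∀ {Z : C} (a : Z ⟶ G.C1) (h : a ≫ G.c = (a ≫ i) ≫ G.d),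
      S.comp a (a ≫ i) h = a ≫ G.d ≫ G.e) ∧
    (∀ {Z : C} (a : Z ⟶ G.C1) (h : (a ≫ i) ≫ G.c = a ≫ G.d),
      S.comp (a ≫ i) a h = a ≫ G.c ≫ G.e)

/-- An internal groupoid. -/
structure GroupoidObj (C : Type u) [Category.{v} C] where
  graph : ReflexiveGraph C
  str : CatStruct graph
  hasInv : str.HasInverses

/-- Internal functors between internal groupoids. -/
@[ext]
structure GrpdHom (A B : GroupoidObj C) where
  f0 : A.graph.C0 ⟶ B.graph.C0
  f1 : A.graph.C1 ⟶ B.graph.C1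
  hd : f1 ≫ B.graph.d = A.graph.d ≫ f0
  hc : f1 ≫ B.graph.c = A.graph.c ≫ f0
  he : A.graph.e ≫ f1 = f0 ≫ B.graph.e
  hm : ∀ {Z : C} (a b : Z ⟶ A.graph.C1) (h : a ≫ A.graph.c = b ≫ A.graph.d)
      (h' : (a ≫ f1) ≫ B.graph.c = (b ≫ f1) ≫ B.graph.d),
      A.str.comp a b h ≫ f1 = B.str.comp (a ≫ f1) (b ≫ f1) h'

lemma GrpdHom.cond {A B : GroupoidObj C} (f : GrpdHom A B) {Z : C} {a b : Z ⟶ A.graph.C1}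
    (h : a ≫ A.graph.c = b ≫ A.graph.d) :
    (a ≫ f.f1) ≫ B.graph.c = (b ≫ f.f1) ≫ B.graph.d := by
  rw [Category.assoc, f.hc, Category.assoc, f.hd, ← Category.assoc, h, Category.assoc]

def GrpdHom.id (A : GroupoidObj C) : GrpdHom A A where
  f0 := 𝟙 _
  f1 := 𝟙 _
  hd := by simp
  hc := by simp
  he := by simp
  hm := by intros; simp

def GrpdHom.comp {A B D : GroupoidObj C} (f : GrpdHom A B) (g : GrpdHom B D) : GrpdHom A D where
  f0 := f.f0 ≫ g.f0
  f1 := f.f1 ≫ g.f1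
  hd := by rw [Category.assoc, g.hd, ← Category.assoc, f.hd, Category.assoc]
  hc := by rw [Category.assoc, g.hc, ← Category.assoc, f.hc, Category.assoc]
  he := by rw [← Category.assoc, f.he, Category.assoc, g.he, ← Category.assoc]
  hm := by
    intro Z a b h h'
    rw [← Category.assoc, f.hm a b h (f.cond h), g.hm _ _ (f.cond h) (g.cond (f.cond h))]
    simp only [Category.assoc]

instance : Category (GroupoidObj C) where
  Hom := GrpdHom
  id := GrpdHom.id
  comp := GrpdHom.comp
  id_comp f := by apply GrpdHom.ext <;> simp [GrpdHom.comp, GrpdHom.id]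
  comp_id f := by apply GrpdHom.ext <;> simp [GrpdHom.comp, GrpdHom.id]
  assoc f g h := by apply GrpdHom.ext <;> simp [GrpdHom.comp]

/-- Coerce a morphism of internal groupoids to its underlying data. -/
def homToGrpdHom {A B : GroupoidObj C} (f : A ⟶ B) : GrpdHom A B := f

/-- Morphisms of reflexive graphs. -/
@[ext]
structure RGHom (A B : ReflexiveGraph C) where
  f0 : A.C0 ⟶ B.C0
  f1 : A.C1 ⟶ B.C1
  hd : f1 ≫ B.d = A.d ≫ f0
  hc : f1 ≫ B.c = A.c ≫ f0
  he : A.e ≫ f1 = f0 ≫ B.e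

instance : Category (ReflexiveGraph C) where
  Hom := RGHom
  id A := ⟨𝟙 _, 𝟙 _, by simp, by simp, by simp⟩
  comp f g := ⟨f.f0 ≫ g.f0, f.f1 ≫ g.f1,
    by rw [Category.assoc, g.hd, ← Category.assoc, f.hd, Category.assoc],
    by rw [Category.assoc, g.hc, ← Category.assoc, f.hc, Category.assoc],
    by rw [← Category.assoc, f.he, Category.assoc, g.he, ← Category.assoc]⟩
  id_comp f := by apply RGHom.ext <;> simp
  comp_id f := by apply RGHom.ext <;> simp
  assoc f g h := by apply RGHom.ext <;> simp

def homToRGHom {A B : ReflexiveGraph C} (f : A ⟶ B) : RGHom A B := f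

/-- The forgetful functor from internal groupoids to reflexive graphs. -/
def forgetToRG (C : Type u) [Category.{v} C] : GroupoidObj C ⥤ ReflexiveGraph C where
  obj A := A.graph
  map f := ⟨(homToGrpdHom f).f0, (homToGrpdHom f).f1, (homToGrpdHom f).hd,
    (homToGrpdHom f).hc, (homToGrpdHom f).he⟩
  map_id A := by apply RGHom.ext <;> rfl
  map_comp f g := by apply RGHom.ext <;> rfl

/-- A discrete internal groupoid: the unit is an isomorphism. -/
def GroupoidObj.IsDiscrete (A : GroupoidObj C) : Prop := IsIso A.graph.e

/-- An internal double groupoid (an internal groupoid in internal groupoids) is a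
2-groupoid when its groupoid of objects is discrete. -/
def Is2Grpd (D : GroupoidObj (GroupoidObj C)) : Prop := D.graph.C0.IsDiscrete

/-- Zero morphisms, defined without extra structure: morphisms factoring through a
zero object. -/
def IsZeroMor {A B : C} (f : A ⟶ B) : Prop :=
  ∃ (Z : C) (_ : IsZero Z) (g : A ⟶ Z) (h : Z ⟶ B), f = g ≫ h

/-- `κ` is a kernel of `α`. -/
def IsKernelOf {A B K : C} (κ : K ⟶ A) (α : A ⟶ B) : Prop :=
  IsZeroMor (κ ≫ α) ∧ ∀ {Z : C} (g : Z ⟶ A), IsZeroMor (g ≫ α) → ∃! l : Z ⟶ K, l ≫ κ = g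

/-- A split extension with kernel object `Xo`. -/
structure SplitExtOn (Xo : C) where
  A : C
  B : C
  κ : Xo ⟶ A
  α : A ⟶ B
  β : B ⟶ A
  split : β ≫ α = 𝟙 B
  ker : IsKernelOf κ α

/-- A generic split extension with kernel `Xo`: terminal among split extensions
with kernel `Xo` (morphisms being the identity on the kernel). -/
def IsGenericSplitExt {Xo : C} (E : SplitExtOn Xo) : Prop :=
  ∀ E' : SplitExtOn Xo, ∃! vw : (E'.A ⟶ E.A) × (E'.B ⟶ E.B),
    E'.κ ≫ vw.1 = E.κ ∧ vw.1 ≫ E.α = E'.α ≫ vw.2 ∧ E'.β ≫ vw.1 = vw.2 ≫ E.β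

/-- Action representability: every object admits a generic split extension. -/
def ActionRepresentable (C : Type u) [Category.{v} C] : Prop :=
  ∀ X : C, ∃ E : SplitExtOn X, IsGenericSplitExt E

/-- A protoadditive functor: preserves kernels of split epimorphisms. -/
def Protoadditive {X : Type u'} [Category.{v'} X] (H : X ⥤ C) : Prop :=
  ∀ {A B K : X} (α : A ⟶ B) (β : B ⟶ A), β ≫ α = 𝟙 B →
    ∀ (κ : K ⟶ A), IsKernelOf κ α → IsKernelOf (H.map κ) (H.map α)

/-- A semi-abelian category: pointed, Barr-exact, protomodular (split short five
lemma), with binary coproducts. -/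
class SemiAbelian (C : Type u) [Category.{v} C] extends ExactCat C : Prop where
  hasZeroObject : HasZeroObject C
  hasBinaryCoproducts : HasBinaryCoproducts C
  ssfl : ∀ {A B B' Co : C} (k : A ⟶ B) (p : B ⟶ Co) (s : Co ⟶ B)
      (k' : A ⟶ B') (p' : B' ⟶ Co) (s' : Co ⟶ B') (b : B ⟶ B'),
      s ≫ p = 𝟙 Co → s' ≫ p' = 𝟙 Co → IsKernelOf k p → IsKernelOf k' p' →
      k ≫ b = k' → b ≫ p' = p → s ≫ b = s' → IsIso b

/-- A natural Mal'tsev operation on a category with binary products. -/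
def IsNaturallyMaltsev (C : Type u) [Category.{v} C] [HasBinaryProducts C] : Prop :=
  ∃ p : ∀ A : C, (A ⨯ A) ⨯ A ⟶ A,
    (∀ {A B : C} (f : A ⟶ B), prod.map (prod.map f f) f ≫ p B = p A ≫ f) ∧
    (∀ A : C, prod.lift (prod.lift prod.fst prod.snd) prod.snd ≫ p A
        = (prod.fst : A ⨯ A ⟶ A)) ∧
    (∀ A : C, prod.lift (prod.lift prod.fst prod.fst) prod.snd ≫ p A
        = (prod.snd : A ⨯ A ⟶ A))

namespace Stmt4Aux

open CategoryTheory CategoryTheory.Limits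

variable {C : Type u} [Category.{v} C]

lemma comp_congr {G : ReflexiveGraph C} (S : CatStruct G) {Z : C} {a a' b b' : Z ⟶ G.C1}
    (ha : a = a') (hb : b = b') (h : a ≫ G.c = b ≫ G.d) (h' : a' ≫ G.c = b' ≫ G.d) :
    S.comp a b h = S.comp a' b' h' := by cases ha; cases hb; rfl

lemma descExists {A B X : C} (p : A ⟶ B) (rp : RegularEpi p) (u : A ⟶ X)
    (compat : ∀ {W : C} (g1 g2 : W ⟶ A), g1 ≫ p = g2 ≫ p → g1 ≫ u = g2 ≫ u) :
    ∃ w : B ⟶ X, p ≫ w = u := by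
  haveI := rp
  obtain ⟨w, hw⟩ := RegularEpi.desc' rp u (compat _ _ rp.w)
  exact ⟨w, hw⟩

/-- composing a regular epi with an iso gives a regular epi -/
noncomputable def regEpiCompIso {A B B' : C} (g : A ⟶ B) (j : B ⟶ B') (rg : RegularEpi g)
    [IsIso j] : RegularEpi (g ≫ j) where
  W := rg.W
  left := rg.left
  right := rg.right
  w := by rw [← Category.assoc, ← Category.assoc, rg.w]
  isColimit := by
    refine Cofork.IsColimit.mk _ (fun s => inv j ≫ (RegularEpi.desc' rg s.π s.condition).1)
      (fun s => ?_) (fun s m hm => ?_)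
    · have h := (RegularEpi.desc' rg s.π s.condition).2
      show (g ≫ j) ≫ inv j ≫ _ = s.π
      simp only [Category.assoc, IsIso.hom_inv_id_assoc]
      exact h
    · haveI := RegularEpi.epi g rg
      haveI : Epi (g ≫ j) := epi_comp g j
      rw [← cancel_epi (g ≫ j)]
      have h := (RegularEpi.desc' rg s.π s.condition).2
      simp only [Category.assoc] at hm ⊢
      rw [IsIso.hom_inv_id_assoc, h]
      simpa using hm

section Maltsev

variable [MaltsevCat C] [HasFiniteLimits C]

/-- Difunctionality of jointly monic spans in a Mal'tsev category. -/
lemma lemD {X Y R : C} (r1 : R ⟶ X) (r2 : R ⟶ Y)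
    (jm : ∀ {Z : C} (F G : Z ⟶ R), F ≫ r1 = G ≫ r1 → F ≫ r2 = G ≫ r2 → F = G)
    {Z : C} (u v w : Z ⟶ R) (huv : u ≫ r2 = v ≫ r2) (hvw : v ≫ r1 = w ≫ r1) :
    ∃ τ : Z ⟶ R, τ ≫ r1 = u ≫ r1 ∧ τ ≫ r2 = w ≫ r2 := by
  let SR := pullback (pullback.snd r1 r1 ≫ r2) r2
  let s1 : SR ⟶ R := pullback.fst _ _ ≫ pullback.fst r1 r1
  let s2 : SR ⟶ R := pullback.snd _ _
  let kk : SR ⟶ R := pullback.fst _ _ ≫ pullback.snd r1 r1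
  have hkr1 : kk ≫ r1 = s1 ≫ r1 := by
    simp only [kk, s1, Category.assoc, pullback.condition]
  have hkr2 : kk ≫ r2 = s2 ≫ r2 := by
    simp only [kk, s2, Category.assoc]
    exact pullback.condition
  have jmS : ∀ {W : C} (F G : W ⟶ SR), F ≫ s1 = G ≫ s1 → F ≫ s2 = G ≫ s2 → F = G := by
    intro W F G h1 h2
    have hkk : F ≫ kk = G ≫ kk := by
      apply jm
      · simp only [Category.assoc, hkr1]
        simp only [← Category.assoc, h1]
      · simp only [Category.assoc, hkr2]
        simp only [← Category.assoc, h2]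
    apply pullback.hom_ext
    · apply pullback.hom_ext
      · simpa only [s1, Category.assoc] using h1
      · simpa only [kk, Category.assoc] using hkk
    · simpa only [s2] using h2
  let ρ : RelOn R := ⟨SR, s1, s2, fun F G h1 h2 => jmS F G h1 h2⟩
  have hrefl : ρ.Reflexive := by
    refine ⟨pullback.lift (pullback.lift (𝟙 R) (𝟙 R) rfl) (𝟙 R) (by rw [pullback.lift_snd_assoc, Category.id_comp]), ?_, ?_⟩
    · show _ ≫ s1 = _
      simp only [s1, ← Category.assoc, pullback.lift_fst]
    · show _ ≫ s2 = _
      exact pullback.lift_snd _ _ _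
  obtain ⟨hsym, htr⟩ := MaltsevCat.refl_is_equiv ρ hrefl
  obtain ⟨σ, hσ1, hσ2⟩ := hsym
  let e1 : Z ⟶ SR := pullback.lift (pullback.lift v v rfl) u
    (by rw [← Category.assoc, pullback.lift_snd]; exact huv.symm)
  have he1s1 : e1 ≫ s1 = v := by
    simp only [e1, s1, ← Category.assoc, pullback.lift_fst]
  have he1s2 : e1 ≫ s2 = u := pullback.lift_snd _ _ _
  let e2 : Z ⟶ SR := pullback.lift (pullback.lift v w hvw) w
    (by rw [← Category.assoc, pullback.lift_snd])
  have he2s1 : e2 ≫ s1 = v := by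
    simp only [e2, s1, ← Category.assoc, pullback.lift_fst]
  have he2s2 : e2 ≫ s2 = w := pullback.lift_snd _ _ _
  have ha : (e1 ≫ σ) ≫ ρ.r2 = e2 ≫ ρ.r1 := by
    show (e1 ≫ σ) ≫ s2 = e2 ≫ s1
    rw [Category.assoc, show σ ≫ s2 = σ ≫ ρ.r2 from rfl, hσ2, he2s1]
    exact he1s1
  obtain ⟨τ0, hτ1, hτ2⟩ := htr (e1 ≫ σ) e2 ha
  have hτs1 : τ0 ≫ s1 = u := by
    have h := hτ1
    rw [show (e1 ≫ σ) ≫ ρ.r1 = e1 ≫ σ ≫ ρ.r1 from Category.assoc _ _ _, hσ1] at h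
    rw [show e1 ≫ ρ.r2 = u from he1s2] at h
    exact h
  have hτs2 : τ0 ≫ s2 = w := by
    rw [show τ0 ≫ ρ.r2 = τ0 ≫ s2 from rfl] at hτ2
    rw [hτ2]; exact he2s2
  refine ⟨τ0 ≫ kk, ?_, ?_⟩
  · rw [Category.assoc, hkr1, ← Category.assoc, hτs1]
  · rw [Category.assoc, hkr2, ← Category.assoc, hτs2]

end Maltsev

end Stmt4Aux
namespace Stmt4Aux

open CategoryTheory CategoryTheory.Limits

variable {C : Type u} [Category.{v} C]

lemma natcond {G : ReflexiveGraph C} {W Z : C} (w : W ⟶ Z) {a b : Z ⟶ G.C1}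
    (h : a ≫ G.c = b ≫ G.d) : (w ≫ a) ≫ G.c = (w ≫ b) ≫ G.d := by
  rw [Category.assoc, h, Category.assoc]

section LC

variable {G : ReflexiveGraph C} (S : CatStruct G)

/-- In a groupoid, composition is left-cancellative. -/
lemma cancel_left (hS : S.HasInverses) {Z : C} (x y y' : Z ⟶ G.C1)
    (h : x ≫ G.c = y ≫ G.d) (h' : x ≫ G.c = y' ≫ G.d)
    (heq : S.comp x y h = S.comp x y' h') : y = y' := by
  obtain ⟨i, hid, hic, _, hinv2⟩ := hS
  have hxic : (x ≫ i) ≫ G.c = x ≫ G.d := by rw [Category.assoc, hic]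
  have key : ∀ (y : Z ⟶ G.C1) (h : x ≫ G.c = y ≫ G.d),
      y = S.comp (x ≫ i) (S.comp x y h)
        (by rw [Category.assoc, hic, S.comp_d]) := by
    intro y h
    have h3 : S.comp (x ≫ i) x hxic ≫ G.c = y ≫ G.d := by rw [S.comp_c]; exact h
    calc y = S.comp (y ≫ G.d ≫ G.e) y (by
            simp only [Category.assoc, G.ec, Category.comp_id]) :=
          (S.comp_unit_l y _).symm
      _ = S.comp (S.comp (x ≫ i) x hxic) y h3 := by
          apply comp_congr
          · rw [hinv2 x hxic, ← Category.assoc, ← h, Category.assoc]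
          · rfl
      _ = S.comp (x ≫ i) (S.comp x y h) _ := S.comp_assoc _ _ _ _ _ _ _
  rw [key y h, key y' h']
  exact comp_congr S rfl heq _ _

end LC

section Star

variable [MaltsevCat C] [HasFiniteLimits C]
variable {G H : ReflexiveGraph C} (S : CatStruct G) (f : RGHom G H)

/-- The kernel pair of `f.f1` is compatible with composition. -/
lemma star (hS : S.HasInverses) {Z : C}
    (s t s' t' : Z ⟶ G.C1) (hst : s ≫ G.c = t ≫ G.d) (hst' : s' ≫ G.c = t' ≫ G.d)
    (hs : s ≫ f.f1 = s' ≫ f.f1) (ht : t ≫ f.f1 = t' ≫ f.f1) :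
    S.comp s t hst ≫ f.f1 = S.comp s' t' hst' ≫ f.f1 := by
  let KP := pullback f.f1 f.f1
  let k1 : KP ⟶ G.C1 := pullback.fst _ _
  let k2 : KP ⟶ G.C1 := pullback.snd _ _
  have hKP : k1 ≫ f.f1 = k2 ≫ f.f1 := pullback.condition
  let L : KP ⟶ G.C0 ⨯ G.C0 := prod.lift (k1 ≫ G.c) (k2 ≫ G.c)
  let M : KP ⟶ G.C0 ⨯ G.C0 := prod.lift (k1 ≫ G.d) (k2 ≫ G.d)
  let Rhat := pullback L M
  let pf : Rhat ⟶ KP := pullback.fst _ _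
  let ps : Rhat ⟶ KP := pullback.snd _ _
  have hcomp1 : pf ≫ k1 ≫ G.c = ps ≫ k1 ≫ G.d := by
    have h := congrArg (fun z => z ≫ (prod.fst : G.C0 ⨯ G.C0 ⟶ G.C0))
      (pullback.condition (f := L) (g := M))
    simpa only [L, M, Category.assoc, prod.lift_fst] using h
  have hcomp2 : pf ≫ k2 ≫ G.c = ps ≫ k2 ≫ G.d := by
    have h := congrArg (fun z => z ≫ (prod.snd : G.C0 ⨯ G.C0 ⟶ G.C0))
      (pullback.condition (f := L) (g := M))
    simpa only [L, M, Category.assoc, prod.lift_snd] using h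
  have hc1 : (pf ≫ k1) ≫ G.c = (ps ≫ k1) ≫ G.d := by
    simpa only [Category.assoc] using hcomp1
  have hc2 : (pf ≫ k2) ≫ G.c = (ps ≫ k2) ≫ G.d := by
    simpa only [Category.assoc] using hcomp2
  let r1 : Rhat ⟶ KP := pf
  let r2 : Rhat ⟶ G.C1 ⨯ G.C1 :=
    prod.lift (S.comp (pf ≫ k1) (ps ≫ k1) hc1) (S.comp (pf ≫ k2) (ps ≫ k2) hc2)
  -- joint monicity of (r1, r2)
  have jm : ∀ {W : C} (F F' : W ⟶ Rhat), F ≫ r1 = F' ≫ r1 → F ≫ r2 = F' ≫ r2 → F = F' := by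
    intro W F F' h1 h2
    have e1 : F ≫ pf = F' ≫ pf := h1
    have c2a := congrArg (fun z => z ≫ (prod.fst : G.C1 ⨯ G.C1 ⟶ G.C1)) h2
    have c2b := congrArg (fun z => z ≫ (prod.snd : G.C1 ⨯ G.C1 ⟶ G.C1)) h2
    simp only [r2, Category.assoc, prod.lift_fst, prod.lift_snd] at c2a c2b
    rw [S.comp_natural F _ _ hc1 (natcond F hc1), S.comp_natural F' _ _ hc1 (natcond F' hc1)]
      at c2a
    rw [S.comp_natural F _ _ hc2 (natcond F hc2), S.comp_natural F' _ _ hc2 (natcond F' hc2)]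
      at c2b
    have efk1 : F' ≫ pf ≫ k1 = F ≫ pf ≫ k1 := by
      rw [← Category.assoc, ← e1, Category.assoc]
    have efk2 : F' ≫ pf ≫ k2 = F ≫ pf ≫ k2 := by
      rw [← Category.assoc, ← e1, Category.assoc]
    have c2a' := c2a.trans (comp_congr S efk1 rfl (natcond F' hc1)
      (by rw [← efk1]; exact natcond F' hc1))
    have c2b' := c2b.trans (comp_congr S efk2 rfl (natcond F' hc2)
      (by rw [← efk2]; exact natcond F' hc2))
    have eq1 := cancel_left S hS _ _ _ _ _ c2a'
    have eq2 := cancel_left S hS _ _ _ _ _ c2b'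
    apply pullback.hom_ext
    · exact e1
    · apply pullback.hom_ext
      · simpa only [Category.assoc] using eq1
      · simpa only [Category.assoc] using eq2
  -- elements of Rhat
  have mkKPcond : ∀ {W : C} (x y : W ⟶ G.C1), x ≫ f.f1 = y ≫ f.f1 →
      (x : W ⟶ G.C1) ≫ f.f1 = y ≫ f.f1 := fun _ _ h => h
  -- build KP elements
  let sE : Z ⟶ KP := pullback.lift s s' hs
  let tE : Z ⟶ KP := pullback.lift t t' ht
  have hde : (s ≫ G.d ≫ G.e) ≫ f.f1 = (s' ≫ G.d ≫ G.e) ≫ f.f1 := by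
    have : G.d ≫ G.e ≫ f.f1 = f.f1 ≫ H.d ≫ H.e := by
      rw [f.he, ← Category.assoc, ← f.hd, Category.assoc]
    simp only [Category.assoc, this]
    simp only [← Category.assoc, hs]
  let uE : Z ⟶ KP := pullback.lift (s ≫ G.d ≫ G.e) (s' ≫ G.d ≫ G.e) hde
  have hce : (s ≫ G.c ≫ G.e) ≫ f.f1 = (s' ≫ G.c ≫ G.e) ≫ f.f1 := by
    have : G.c ≫ G.e ≫ f.f1 = f.f1 ≫ H.c ≫ H.e := by
      rw [f.he, ← Category.assoc, ← f.hc, Category.assoc]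
    simp only [Category.assoc, this]
    simp only [← Category.assoc, hs]
  let vE : Z ⟶ KP := pullback.lift (s ≫ G.c ≫ G.e) (s' ≫ G.c ≫ G.e) hce
  -- Rhat elements: mkR u v needs u ≫ L = v ≫ M
  have mkRcond : ∀ (u v : Z ⟶ KP), u ≫ k1 ≫ G.c = v ≫ k1 ≫ G.d →
      u ≫ k2 ≫ G.c = v ≫ k2 ≫ G.d → u ≫ L = v ≫ M := by
    intro u v hu hv
    apply Limits.prod.hom_ext
    · simpa only [L, M, Category.assoc, prod.lift_fst] using hu
    · simpa only [L, M, Category.assoc, prod.lift_snd] using hv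
  have hsE1 : sE ≫ k1 = s := pullback.lift_fst _ _ _
  have hsE2 : sE ≫ k2 = s' := pullback.lift_snd _ _ _
  have htE1 : tE ≫ k1 = t := pullback.lift_fst _ _ _
  have htE2 : tE ≫ k2 = t' := pullback.lift_snd _ _ _
  have huE1 : uE ≫ k1 = s ≫ G.d ≫ G.e := pullback.lift_fst _ _ _
  have huE2 : uE ≫ k2 = s' ≫ G.d ≫ G.e := pullback.lift_snd _ _ _
  have hvE1 : vE ≫ k1 = s ≫ G.c ≫ G.e := pullback.lift_fst _ _ _
  have hvE2 : vE ≫ k2 = s' ≫ G.c ≫ G.e := pullback.lift_snd _ _ _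
  -- U := (uE, sE), V := (sE, vE), W := (sE, tE)
  let U : Z ⟶ Rhat := pullback.lift uE sE (mkRcond _ _
    (by simp only [← Category.assoc]; rw [huE1, hsE1]
        simp only [Category.assoc, G.ec, Category.comp_id])
    (by simp only [← Category.assoc]; rw [huE2, hsE2]
        simp only [Category.assoc, G.ec, Category.comp_id]))
  let V : Z ⟶ Rhat := pullback.lift sE vE (mkRcond _ _
    (by simp only [← Category.assoc]; rw [hsE1, hvE1]
        simp only [Category.assoc, G.ed, Category.comp_id])
    (by simp only [← Category.assoc]; rw [hsE2, hvE2]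
        simp only [Category.assoc, G.ed, Category.comp_id]))
  let Wt : Z ⟶ Rhat := pullback.lift sE tE (mkRcond _ _
    (by simp only [← Category.assoc]; rw [hsE1, htE1]; exact hst)
    (by simp only [← Category.assoc]; rw [hsE2, htE2]; exact hst'))
  -- r2 values
  have hr2 : ∀ (F : Z ⟶ Rhat), F ≫ r2 = prod.lift
      (S.comp (F ≫ pf ≫ k1) (F ≫ ps ≫ k1) (natcond F hc1))
      (S.comp (F ≫ pf ≫ k2) (F ≫ ps ≫ k2) (natcond F hc2)) := by
    intro F
    apply Limits.prod.hom_ext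
    · simp only [r2, Category.assoc, prod.lift_fst]
      rw [S.comp_natural F _ _ hc1 (natcond F hc1)]
    · simp only [r2, Category.assoc, prod.lift_snd]
      rw [S.comp_natural F _ _ hc2 (natcond F hc2)]
  have hUpf : U ≫ pf = uE := pullback.lift_fst _ _ _
  have hUps : U ≫ ps = sE := pullback.lift_snd _ _ _
  have hVpf : V ≫ pf = sE := pullback.lift_fst _ _ _
  have hVps : V ≫ ps = vE := pullback.lift_snd _ _ _
  have hWpf : Wt ≫ pf = sE := pullback.lift_fst _ _ _
  have hWps : Wt ≫ ps = tE := pullback.lift_snd _ _ _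
  -- hypotheses of difunctionality
  have hUr2 : U ≫ r2 = prod.lift s s' := by
    rw [hr2 U]
    have e1 : U ≫ pf ≫ k1 = s ≫ G.d ≫ G.e := by
      rw [← Category.assoc, hUpf, huE1]
    have e2 : U ≫ ps ≫ k1 = s := by rw [← Category.assoc, hUps, hsE1]
    have e3 : U ≫ pf ≫ k2 = s' ≫ G.d ≫ G.e := by
      rw [← Category.assoc, hUpf, huE2]
    have e4 : U ≫ ps ≫ k2 = s' := by rw [← Category.assoc, hUps, hsE2]
    congr 1
    · rw [comp_congr S e1 e2 _ (by
        rw [Category.assoc, Category.assoc, G.ec, Category.comp_id])]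
      exact S.comp_unit_l s _
    · rw [comp_congr S e3 e4 _ (by
        rw [Category.assoc, Category.assoc, G.ec, Category.comp_id])]
      exact S.comp_unit_l s' _
  have hVr2 : V ≫ r2 = prod.lift s s' := by
    rw [hr2 V]
    have e1 : V ≫ pf ≫ k1 = s := by rw [← Category.assoc, hVpf, hsE1]
    have e2 : V ≫ ps ≫ k1 = s ≫ G.c ≫ G.e := by rw [← Category.assoc, hVps, hvE1]
    have e3 : V ≫ pf ≫ k2 = s' := by rw [← Category.assoc, hVpf, hsE2]
    have e4 : V ≫ ps ≫ k2 = s' ≫ G.c ≫ G.e := by rw [← Category.assoc, hVps, hvE2]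
    congr 1
    · rw [comp_congr S e1 e2 _ (by
        rw [Category.assoc, Category.assoc, G.ed, Category.comp_id])]
      exact S.comp_unit_r s _
    · rw [comp_congr S e3 e4 _ (by
        rw [Category.assoc, Category.assoc, G.ed, Category.comp_id])]
      exact S.comp_unit_r s' _
  have hWr2 : Wt ≫ r2 = prod.lift (S.comp s t hst) (S.comp s' t' hst') := by
    rw [hr2 Wt]
    have e1 : Wt ≫ pf ≫ k1 = s := by rw [← Category.assoc, hWpf, hsE1]
    have e2 : Wt ≫ ps ≫ k1 = t := by rw [← Category.assoc, hWps, htE1]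
    have e3 : Wt ≫ pf ≫ k2 = s' := by rw [← Category.assoc, hWpf, hsE2]
    have e4 : Wt ≫ ps ≫ k2 = t' := by rw [← Category.assoc, hWps, htE2]
    congr 1
    · exact comp_congr S e1 e2 _ _
    · exact comp_congr S e3 e4 _ _
  -- difunctionality
  obtain ⟨τ, hτ1, hτ2⟩ := lemD r1 r2 jm U V Wt (by rw [hUr2, hVr2])
    (by show V ≫ pf = Wt ≫ pf; rw [hVpf, hWpf])
  -- unpack τ
  have hτpf : τ ≫ pf = uE := by
    have : τ ≫ r1 = U ≫ r1 := hτ1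
    show τ ≫ pf = _
    rw [show τ ≫ pf = τ ≫ r1 from rfl, this]
    exact hUpf
  have hτr2 := hτ2.trans hWr2
  rw [hr2 τ] at hτr2
  have hτa := congrArg (fun z => z ≫ (prod.fst : G.C1 ⨯ G.C1 ⟶ G.C1)) hτr2
  have hτb := congrArg (fun z => z ≫ (prod.snd : G.C1 ⨯ G.C1 ⟶ G.C1)) hτr2
  simp only [prod.lift_fst, prod.lift_snd] at hτa hτb
  -- τ's first components are units, so the comp equals the second component
  have hτk1 : τ ≫ pf ≫ k1 = s ≫ G.d ≫ G.e := by rw [← Category.assoc, hτpf, huE1]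
  have hτk2 : τ ≫ pf ≫ k2 = s' ≫ G.d ≫ G.e := by rw [← Category.assoc, hτpf, huE2]
  -- d of the second components
  have hd1 : (τ ≫ ps ≫ k1) ≫ G.d = s ≫ G.d := by
    have := natcond τ hc1
    rw [hτk1] at this
    rw [← this]
    simp only [Category.assoc, G.ec, Category.comp_id]
  have hd2 : (τ ≫ ps ≫ k2) ≫ G.d = s' ≫ G.d := by
    have := natcond τ hc2
    rw [hτk2] at this
    rw [← this]
    simp only [Category.assoc, G.ec, Category.comp_id]
  have haux1 : (τ ≫ ps ≫ k1) ≫ G.d ≫ G.e = s ≫ G.d ≫ G.e := by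
    rw [← Category.assoc, hd1, Category.assoc]
  have haux2 : (τ ≫ ps ≫ k2) ≫ G.d ≫ G.e = s' ≫ G.d ≫ G.e := by
    rw [← Category.assoc, hd2, Category.assoc]
  have hB1 : ((τ ≫ ps ≫ k1) ≫ G.d ≫ G.e) ≫ G.c = (τ ≫ ps ≫ k1) ≫ G.d := by
    simp only [Category.assoc, G.ec, Category.comp_id]
  have hB2 : ((τ ≫ ps ≫ k2) ≫ G.d ≫ G.e) ≫ G.c = (τ ≫ ps ≫ k2) ≫ G.d := by
    simp only [Category.assoc, G.ec, Category.comp_id]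
  have hval1 : τ ≫ ps ≫ k1 = S.comp s t hst := by
    rw [← hτa]
    rw [comp_congr S (hτk1.trans haux1.symm) rfl _ hB1]
    exact (S.comp_unit_l _ hB1).symm
  have hval2 : τ ≫ ps ≫ k2 = S.comp s' t' hst' := by
    rw [← hτb]
    rw [comp_congr S (hτk2.trans haux2.symm) rfl _ hB2]
    exact (S.comp_unit_l _ hB2).symm
  -- conclude using the kernel pair property of τ ≫ ps
  have := congrArg (fun z => (τ ≫ ps) ≫ z) hKP
  simp only [Category.assoc] at this
  rw [show τ ≫ ps ≫ k1 ≫ f.f1 = (τ ≫ ps ≫ k1) ≫ f.f1 by simp only [Category.assoc],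
    show τ ≫ ps ≫ k2 ≫ f.f1 = (τ ≫ ps ≫ k2) ≫ f.f1 by simp only [Category.assoc],
    hval1, hval2] at this
  exact this

end Star

end Stmt4Aux
namespace Stmt4Aux

open CategoryTheory CategoryTheory.Limits

variable {C : Type u} [Category.{v} C]

section T5

variable [RegularCat C] [MaltsevCat C] [HasFiniteLimits C]

/-- Bourn's regular pushout lemma: in a regular Mal'tsev category, a morphism of
split epimorphisms with regular epi components induces a regular epi to the pullback. -/
lemma t5 {A A0 B B0 : C} (u : A ⟶ A0) (s : A0 ⟶ A) (hsu : s ≫ u = 𝟙 A0)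
    (v : B ⟶ B0) (w1 : A ⟶ B) (w0 : A0 ⟶ B0) (t' : B0 ⟶ B) (rw1 : RegularEpi w1)
    (sq1 : u ≫ w0 = w1 ≫ v) (sq2 : s ≫ w1 = w0 ≫ t') :
    Nonempty (RegularEpi (pullback.lift u w1 sq1 : A ⟶ pullback w0 v)) := by
  haveI := rw1
  set φ : A ⟶ pullback w0 v := pullback.lift u w1 sq1 with hφ
  haveI : HasCoequalizer (pullback.fst φ φ) (pullback.snd φ φ) :=
    RegularCat.hasCoeqOfKernelPair φ _ _ pullback.condition ⟨pullbackIsPullback φ φ⟩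
  set R := coequalizer (pullback.fst φ φ) (pullback.snd φ φ) with hR
  set n : A ⟶ R := coequalizer.π _ _ with hn
  set j : R ⟶ pullback w0 v := coequalizer.desc φ pullback.condition with hj
  have hnj : n ≫ j = φ := coequalizer.π_desc _ _
  -- j is a monomorphism
  have hjm : ∀ {W : C} (g1 g2 : W ⟶ R), g1 ≫ j = g2 ≫ j → g1 = g2 := by
    intro W g1 g2 hg
    obtain ⟨re1⟩ := RegularCat.regEpiStable n g1 (pullback.fst n g1) (pullback.snd n g1)
      pullback.condition ⟨pullbackIsPullback n g1⟩ ⟨coequalizerRegular _ _⟩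
    haveI := re1
    haveI := RegularEpi.epi _ re1
    set ρ1 := pullback.snd n g1
    set x1 := pullback.fst n g1
    obtain ⟨re2⟩ := RegularCat.regEpiStable n (ρ1 ≫ g2) (pullback.fst n (ρ1 ≫ g2))
      (pullback.snd n (ρ1 ≫ g2)) pullback.condition ⟨pullbackIsPullback n (ρ1 ≫ g2)⟩
      ⟨coequalizerRegular _ _⟩
    haveI := re2
    haveI := RegularEpi.epi _ re2
    set ρ2 := pullback.snd n (ρ1 ≫ g2)
    set x2 := pullback.fst n (ρ1 ≫ g2)
    have ha : x1 ≫ n = ρ1 ≫ g1 := pullback.condition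
    have hb : x2 ≫ n = ρ2 ≫ ρ1 ≫ g2 := pullback.condition
    have key : (ρ2 ≫ x1) ≫ φ = x2 ≫ φ := by
      rw [← hnj]
      simp only [Category.assoc]
      rw [← Category.assoc x1 n j, ha, ← Category.assoc x2 n j, hb]
      simp only [Category.assoc]
      rw [hg]
    have hκ : ((ρ2 ≫ x1) ≫ n) = x2 ≫ n := by
      have hcoeq := coequalizer.condition (pullback.fst φ φ) (pullback.snd φ φ)
      have h1 : pullback.lift (ρ2 ≫ x1) x2 key ≫ pullback.fst φ φ ≫ n
          = pullback.lift (ρ2 ≫ x1) x2 key ≫ pullback.snd φ φ ≫ n := by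
        rw [← Category.assoc, ← Category.assoc]
        rw [show (pullback.lift (ρ2 ≫ x1) x2 key ≫ pullback.fst φ φ) ≫ n
            = pullback.lift (ρ2 ≫ x1) x2 key ≫ (pullback.fst φ φ ≫ n) from Category.assoc _ _ _,
          show (pullback.lift (ρ2 ≫ x1) x2 key ≫ pullback.snd φ φ) ≫ n
            = pullback.lift (ρ2 ≫ x1) x2 key ≫ (pullback.snd φ φ ≫ n) from Category.assoc _ _ _,
          hcoeq]
      simpa only [pullback.lift_fst_assoc, pullback.lift_snd_assoc] using h1
    rw [Category.assoc, ha, hb] at hκ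
    rw [← Category.assoc, ← Category.assoc] at hκ
    exact (cancel_epi ρ1).1 ((cancel_epi ρ2).1 (by
      simpa only [Category.assoc] using hκ))
  haveI hjmono : Mono j := ⟨fun _ _ hgx => hjm _ _ hgx⟩
  -- the relation
  set π0 := pullback.fst w0 v
  set π1 := pullback.snd w0 v
  set r1 : R ⟶ A0 := j ≫ π0 with hr1
  set r2 : R ⟶ B := j ≫ π1 with hr2
  have njr1 : n ≫ r1 = u := by
    rw [hr1, ← Category.assoc, hnj, hφ, pullback.lift_fst]
  have njr2 : n ≫ r2 = w1 := by
    rw [hr2, ← Category.assoc, hnj, hφ, pullback.lift_snd]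
  have jm : ∀ {W : C} (F F' : W ⟶ R), F ≫ r1 = F' ≫ r1 → F ≫ r2 = F' ≫ r2 → F = F' := by
    intro W F F' h1 h2
    apply hjm
    apply pullback.hom_ext
    · simpa only [Category.assoc] using h1
    · simpa only [Category.assoc] using h2
  -- the covering of the pullback
  obtain ⟨reρ⟩ := RegularCat.regEpiStable w1 π1 (pullback.fst w1 π1) (pullback.snd w1 π1)
    pullback.condition ⟨pullbackIsPullback w1 π1⟩ ⟨rw1⟩
  haveI := reρ
  haveI := RegularEpi.epi _ reρ
  set g := pullback.fst w1 π1
  set ρ := pullback.snd w1 π1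
  have hgw : g ≫ w1 = ρ ≫ π1 := pullback.condition
  set X1 : pullback w1 π1 ⟶ A0 := ρ ≫ π0 with hX1
  have hPcond : π0 ≫ w0 = π1 ≫ v := pullback.condition
  have hleg1 : ∀ {W' : C} (h : W' ⟶ A), (h ≫ n) ≫ r1 = h ≫ u := by
    intro W' h; rw [Category.assoc, njr1]
  have hleg2 : ∀ {W' : C} (h : W' ⟶ A), (h ≫ n) ≫ r2 = h ≫ w1 := by
    intro W' h; rw [Category.assoc, njr2]
  -- the three elements
  have huv : ((X1 ≫ s) ≫ n) ≫ r2 = ((g ≫ u ≫ s) ≫ n) ≫ r2 := by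
    rw [hleg2, hleg2]
    simp only [Category.assoc]
    rw [sq2, hX1]
    simp only [Category.assoc]
    rw [← Category.assoc π0 w0 t', hPcond, Category.assoc,
      ← Category.assoc u w0 t', sq1, Category.assoc,
      ← Category.assoc g w1 (v ≫ t'), hgw, Category.assoc]
  have hvw : ((g ≫ u ≫ s) ≫ n) ≫ r1 = (g ≫ n) ≫ r1 := by
    rw [hleg1, hleg1]
    simp only [Category.assoc, hsu, Category.comp_id]
  obtain ⟨τ, hτ1, hτ2⟩ := lemD r1 r2 jm ((X1 ≫ s) ≫ n) ((g ≫ u ≫ s) ≫ n) (g ≫ n) huv hvw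
  rw [hleg1] at hτ1
  rw [Category.assoc, hsu, Category.comp_id] at hτ1
  rw [hleg2, hgw] at hτ2
  have hτj : τ ≫ j = ρ := by
    apply pullback.hom_ext
    · rw [Category.assoc]
      exact hτ1
    · rw [Category.assoc]
      exact hτ2
  obtain ⟨w', hw'⟩ := descExists ρ reρ τ (by
    intro W g1 g2 hgg
    apply hjm
    rw [Category.assoc, Category.assoc, hτj]
    exact hgg)
  have hsect : w' ≫ j = 𝟙 (pullback w0 v) := by
    apply (cancel_epi ρ).1
    rw [← Category.assoc, hw', hτj, Category.comp_id]
  haveI : IsIso j := ⟨⟨w', hjm _ _ (by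
      rw [Category.assoc, hsect, Category.comp_id, Category.id_comp]), hsect⟩⟩
  exact ⟨hnj ▸ regEpiCompIso n j (coequalizerRegular _ _)⟩

end T5

end Stmt4Aux
namespace Stmt4Aux

open CategoryTheory CategoryTheory.Limits

variable {C : Type u} [Category.{v} C]

lemma lift_congr {X Y Z' W : C} {f : X ⟶ W} {g : Y ⟶ W} [HasPullback f g]
    {a a' : Z' ⟶ X} {b b' : Z' ⟶ Y} (ha : a = a') (hb : b = b')
    (h : a ≫ f = b ≫ g) (h' : a' ≫ f = b' ≫ g) :
    pullback.lift a b h = pullback.lift a' b' h' := by cases ha; cases hb; rfl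

lemma rg_de {G H : ReflexiveGraph C} (f : RGHom G H) :
    G.d ≫ G.e ≫ f.f1 = f.f1 ≫ H.d ≫ H.e := by
  rw [f.he, ← Category.assoc, ← f.hd, Category.assoc]

lemma rg_ce {G H : ReflexiveGraph C} (f : RGHom G H) :
    G.c ≫ G.e ≫ f.f1 = f.f1 ≫ H.c ≫ H.e := by
  rw [f.he, ← Category.assoc, ← f.hc, Category.assoc]

lemma rgcond {G H : ReflexiveGraph C} (f : RGHom G H) {Z : C} {x y : Z ⟶ G.C1}
    (h : x ≫ G.c = y ≫ G.d) : (x ≫ f.f1) ≫ H.c = (y ≫ f.f1) ≫ H.d := by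
  rw [Category.assoc, f.hc, Category.assoc, f.hd, ← Category.assoc, h, Category.assoc]

section Inverses

variable [RegularCat C] [HasFiniteLimits C]
variable {G H : ReflexiveGraph C} (S : CatStruct G) (f : RGHom G H)

lemma inverses (hS : S.HasInverses) (re1 : RegularEpi f.f1) (T : CatStruct H)
    (hkey : ∀ {Z : C} (x y : Z ⟶ G.C1) (h : x ≫ G.c = y ≫ G.d)
      (h' : (x ≫ f.f1) ≫ H.c = (y ≫ f.f1) ≫ H.d),
      T.comp (x ≫ f.f1) (y ≫ f.f1) h' = S.comp x y h ≫ f.f1) :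
    T.HasInverses := by
  haveI := re1
  haveI := RegularEpi.epi _ re1
  obtain ⟨iG, hid, hic, hinv1, hinv2⟩ := hS
  -- composability of (x, x ≫ iG) in G
  have hGinv1 : ∀ {Z : C} (x : Z ⟶ G.C1), x ≫ G.c = (x ≫ iG) ≫ G.d := by
    intro Z x; rw [Category.assoc, hid]
  have hGinv2 : ∀ {Z : C} (x : Z ⟶ G.C1), (x ≫ iG) ≫ G.c = x ≫ G.d := by
    intro Z x; rw [Category.assoc, hic]
  -- endpoint facts
  have N1 : ∀ {Z : C} (x : Z ⟶ G.C1), ((x ≫ iG) ≫ f.f1) ≫ H.d = (x ≫ f.f1) ≫ H.c := by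
    intro Z x
    rw [Category.assoc, Category.assoc, f.hd, ← Category.assoc iG G.d f.f0, hid,
      Category.assoc, ← f.hc, ← Category.assoc]
  have N2 : ∀ {Z : C} (x : Z ⟶ G.C1), ((x ≫ iG) ≫ f.f1) ≫ H.c = (x ≫ f.f1) ≫ H.d := by
    intro Z x
    rw [Category.assoc, Category.assoc, f.hc, ← Category.assoc iG G.c f.f0, hic,
      Category.assoc, ← f.hd, ← Category.assoc]
  -- value facts
  have key1 : ∀ {Z : C} (x : Z ⟶ G.C1),
      T.comp (x ≫ f.f1) ((x ≫ iG) ≫ f.f1) (rgcond f (hGinv1 x))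
        = (x ≫ f.f1) ≫ H.d ≫ H.e := by
    intro Z x
    rw [hkey x (x ≫ iG) (hGinv1 x) (rgcond f (hGinv1 x)), hinv1 x (hGinv1 x)]
    simp only [Category.assoc]
    rw [rg_de f]
  have key2 : ∀ {Z : C} (x : Z ⟶ G.C1),
      T.comp ((x ≫ iG) ≫ f.f1) (x ≫ f.f1) (rgcond f (hGinv2 x))
        = (x ≫ f.f1) ≫ H.c ≫ H.e := by
    intro Z x
    rw [hkey (x ≫ iG) x (hGinv2 x) (rgcond f (hGinv2 x)), hinv2 x (hGinv2 x)]
    simp only [Category.assoc]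
    rw [rg_ce f]
  -- well-definedness of the inverse
  have compat : ∀ {W : C} (g1 g2 : W ⟶ G.C1), g1 ≫ f.f1 = g2 ≫ f.f1 →
      g1 ≫ iG ≫ f.f1 = g2 ≫ iG ≫ f.f1 := by
    intro W g1 g2 hgg
    have goal' : (g1 ≫ iG) ≫ f.f1 = (g2 ≫ iG) ≫ f.f1 := by
      set v := (g1 ≫ iG) ≫ f.f1 with hv
      set v' := (g2 ≫ iG) ≫ f.f1 with hv'
      set γ := g1 ≫ f.f1 with hγ
      have hγ2 : g2 ≫ f.f1 = γ := hgg.symm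
      have hvd : v ≫ H.d = γ ≫ H.c := N1 g1
      have hvc : v ≫ H.c = γ ≫ H.d := N2 g1
      have hv'd : v' ≫ H.d = γ ≫ H.c := by rw [hv', N1 g2, hγ2]
      have hv'c : v' ≫ H.c = γ ≫ H.d := by rw [hv', N2 g2, hγ2]
      have k1 : T.comp γ v (hvd.symm) = γ ≫ H.d ≫ H.e := by
        rw [show T.comp γ v hvd.symm
            = T.comp (g1 ≫ f.f1) ((g1 ≫ iG) ≫ f.f1) (rgcond f (hGinv1 g1)) from
          comp_congr T rfl rfl _ _, key1 g1]
      have k2 : T.comp v' γ (hv'c.trans rfl) = γ ≫ H.c ≫ H.e := by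
        rw [show T.comp v' γ (hv'c.trans rfl)
            = T.comp ((g2 ≫ iG) ≫ f.f1) (g2 ≫ f.f1) (rgcond f (hGinv2 g2)) from
          comp_congr T rfl hγ2.symm _ _, key2 g2, hγ2]
      -- the uniqueness-of-inverse chain
      have hR : v' ≫ H.c = (v' ≫ H.c ≫ H.e) ≫ H.d := by
        simp only [Category.assoc, H.ed, Category.comp_id]
      symm
      calc v' = T.comp v' (v' ≫ H.c ≫ H.e) hR := (T.comp_unit_r v' hR).symm
        _ = T.comp v' (T.comp γ v hvd.symm) (by rw [T.comp_d]; exact hv'c) :=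
            comp_congr T rfl
              (by rw [k1, ← Category.assoc, hv'c, Category.assoc]) _ _
        _ = T.comp (T.comp v' γ (hv'c.trans rfl)) v
              (by rw [T.comp_c]; exact hvd.symm) :=
            (T.comp_assoc v' γ v _ _ _ _).symm
        _ = T.comp (v ≫ H.d ≫ H.e) v (by
              simp only [Category.assoc, H.ec, Category.comp_id]) :=
            comp_congr T
              (by rw [k2, ← Category.assoc, ← hvd, Category.assoc]) rfl _ _
        _ = v := T.comp_unit_l v _
    simpa only [Category.assoc] using goal'
  obtain ⟨iH, hiH⟩ := descExists f.f1 re1 (iG ≫ f.f1) compat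
  -- the four conditions
  have c1 : iH ≫ H.d = H.c := by
    apply (cancel_epi f.f1).1
    rw [← Category.assoc, hiH, Category.assoc, f.hd, ← Category.assoc iG G.d f.f0, hid, f.hc]
  have c2 : iH ≫ H.c = H.d := by
    apply (cancel_epi f.f1).1
    rw [← Category.assoc, hiH, Category.assoc, f.hc, ← Category.assoc iG G.c f.f0, hic, f.hd]
  refine ⟨iH, c1, c2, ?_, ?_⟩
  · intro Z a h
    obtain ⟨reρ⟩ := RegularCat.regEpiStable f.f1 a (pullback.fst f.f1 a) (pullback.snd f.f1 a)
      pullback.condition ⟨pullbackIsPullback f.f1 a⟩ ⟨re1⟩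
    haveI := reρ
    haveI := RegularEpi.epi _ reρ
    set g := pullback.fst f.f1 a
    set ρ := pullback.snd f.f1 a
    have hga : g ≫ f.f1 = ρ ≫ a := pullback.condition
    apply (cancel_epi ρ).1
    rw [T.comp_natural ρ a (a ≫ iH) h (natcond ρ h)]
    have e1 : ρ ≫ a = g ≫ f.f1 := hga.symm
    have e2 : ρ ≫ a ≫ iH = (g ≫ iG) ≫ f.f1 := by
      rw [← Category.assoc, ← hga, Category.assoc, hiH, ← Category.assoc]
    rw [comp_congr T e1 e2 _ (rgcond f (hGinv1 g)), key1 g]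
    rw [hga]
    simp only [Category.assoc]
  · intro Z a h
    obtain ⟨reρ⟩ := RegularCat.regEpiStable f.f1 a (pullback.fst f.f1 a) (pullback.snd f.f1 a)
      pullback.condition ⟨pullbackIsPullback f.f1 a⟩ ⟨re1⟩
    haveI := reρ
    haveI := RegularEpi.epi _ reρ
    set g := pullback.fst f.f1 a
    set ρ := pullback.snd f.f1 a
    have hga : g ≫ f.f1 = ρ ≫ a := pullback.condition
    apply (cancel_epi ρ).1
    rw [T.comp_natural ρ (a ≫ iH) a h (natcond ρ h)]
    have e1 : ρ ≫ a = g ≫ f.f1 := hga.symm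
    have e2 : ρ ≫ a ≫ iH = (g ≫ iG) ≫ f.f1 := by
      rw [← Category.assoc, ← hga, Category.assoc, hiH, ← Category.assoc]
    rw [comp_congr T e2 e1 _ (rgcond f (hGinv2 g)), key2 g]
    rw [hga]
    simp only [Category.assoc]

end Inverses

end Stmt4Aux
set_option maxHeartbeats 1600000 in
open Stmt4Aux in
/-- In a regular Mal'tsev category, internal groupoids are closed under
regular quotients among reflexive graphs. -/
theorem stmt4 {C : Type u} [Category.{v} C] [RegularCat C] [MaltsevCat C]
    (G H : ReflexiveGraph C) (f : RGHom G H)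
    (h0 : Nonempty (RegularEpi f.f0)) (h1 : Nonempty (RegularEpi f.f1))
    (S : CatStruct G) (hS : S.HasInverses) :
    ∃ T : CatStruct H, T.HasInverses := by
  haveI : HasFiniteLimits C := RegularCat.hasFiniteLimits
  obtain ⟨re0⟩ := h0
  obtain ⟨re1⟩ := h1
  haveI := re0
  haveI := RegularEpi.epi _ re0
  haveI := re1
  haveI := RegularEpi.epi _ re1
  -- the two comparison maps with pullbacks of split epis
  set phid : G.C1 ⟶ pullback f.f0 H.d := pullback.lift G.d f.f1 f.hd.symm with hphid
  obtain ⟨rephid⟩ := t5 G.d G.e G.ed H.d f.f1 f.f0 H.e re1 f.hd.symm f.he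
  haveI := rephid
  haveI := RegularEpi.epi _ rephid
  set phic : G.C1 ⟶ pullback f.f0 H.c := pullback.lift G.c f.f1 f.hc.symm with hphic
  obtain ⟨rephic⟩ := t5 G.c G.e G.ec H.c f.f1 f.f0 H.e re1 f.hc.symm f.he
  haveI := rephic
  haveI := RegularEpi.epi _ rephic
  have hphid1 : phid ≫ pullback.fst f.f0 H.d = G.d := pullback.lift_fst _ _ _
  have hphid2 : phid ≫ pullback.snd f.f0 H.d = f.f1 := pullback.lift_snd _ _ _
  have hphic1 : phic ≫ pullback.fst f.f0 H.c = G.c := pullback.lift_fst _ _ _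
  have hphic2 : phic ≫ pullback.snd f.f0 H.c = f.f1 := pullback.lift_snd _ _ _
  -- projections
  set pg1 := pullback.fst G.c G.d with hpg1
  set pg2 := pullback.snd G.c G.d with hpg2
  set ph1 := pullback.fst H.c H.d with hph1
  set ph2 := pullback.snd H.c H.d with hph2
  set q1 := pullback.fst (G.c ≫ f.f0) H.d with hq1
  set q2 := pullback.snd (G.c ≫ f.f0) H.d with hq2
  have condPG : pg1 ≫ G.c = pg2 ≫ G.d := pullback.condition
  have condPH : ph1 ≫ H.c = ph2 ≫ H.d := pullback.condition
  have condQ : q1 ≫ (G.c ≫ f.f0) = q2 ≫ H.d := pullback.condition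
  -- Map2 : Q ⟶ PH
  have cond2 : (q1 ≫ f.f1) ≫ H.c = q2 ≫ H.d := by
    rw [Category.assoc, f.hc]; exact condQ
  set Map2 : pullback (G.c ≫ f.f0) H.d ⟶ pullback H.c H.d :=
    pullback.lift (q1 ≫ f.f1) q2 cond2 with hMap2def
  have hM2p1 : Map2 ≫ ph1 = q1 ≫ f.f1 := pullback.lift_fst _ _ _
  have hM2p2 : Map2 ≫ ph2 = q2 := pullback.lift_snd _ _ _
  -- Map1 : PG ⟶ Q
  have cond1 : pg1 ≫ (G.c ≫ f.f0) = (pg2 ≫ f.f1) ≫ H.d := by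
    rw [← Category.assoc, condPG, Category.assoc, ← f.hd, ← Category.assoc]
  set Map1 : pullback G.c G.d ⟶ pullback (G.c ≫ f.f0) H.d :=
    pullback.lift pg1 (pg2 ≫ f.f1) cond1 with hMap1def
  have hM1q1 : Map1 ≫ q1 = pg1 := pullback.lift_fst _ _ _
  have hM1q2 : Map1 ≫ q2 = pg2 ≫ f.f1 := pullback.lift_snd _ _ _
  -- Map2 is a regular epi (pullback of f.f1 along ph1)
  have hsq2 : q1 ≫ f.f1 = Map2 ≫ ph1 := hM2p1.symm
  have isLim2 : IsLimit (PullbackCone.mk q1 Map2 hsq2) := by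
    refine PullbackCone.IsLimit.mk hsq2
      (fun s => pullback.lift s.fst (s.snd ≫ ph2) ?_)
      (fun s => pullback.lift_fst _ _ _) (fun s => ?_) (fun s m hm1 hm2 => ?_)
    · rw [← f.hc, ← Category.assoc, s.condition, Category.assoc, condPH, ← Category.assoc]
    · apply pullback.hom_ext
      · rw [Category.assoc, hM2p1, ← Category.assoc, pullback.lift_fst, s.condition]
      · rw [Category.assoc, hM2p2, pullback.lift_snd]
    · apply pullback.hom_ext
      · rw [pullback.lift_fst]; exact hm1
      · rw [pullback.lift_snd]
        show m ≫ q2 = s.snd ≫ ph2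
        rw [← hM2p2, ← Category.assoc, hm2]
  obtain ⟨reM2⟩ := RegularCat.regEpiStable f.f1 ph1 q1 Map2 hsq2 ⟨isLim2⟩ ⟨re1⟩
  haveI := reM2
  haveI := RegularEpi.epi _ reM2
  -- Map1 is a regular epi (pullback of phid along kQ)
  have condkQ : (q1 ≫ G.c) ≫ f.f0 = q2 ≫ H.d := by
    rw [Category.assoc]; exact condQ
  set kQ : pullback (G.c ≫ f.f0) H.d ⟶ pullback f.f0 H.d :=
    pullback.lift (q1 ≫ G.c) q2 condkQ with hkQdef
  have hkQ1 : kQ ≫ pullback.fst f.f0 H.d = q1 ≫ G.c := pullback.lift_fst _ _ _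
  have hkQ2 : kQ ≫ pullback.snd f.f0 H.d = q2 := pullback.lift_snd _ _ _
  have hsq1 : pg2 ≫ phid = Map1 ≫ kQ := by
    apply pullback.hom_ext
    · rw [Category.assoc, hphid1, Category.assoc, hkQ1, ← Category.assoc, hM1q1, condPG]
    · rw [Category.assoc, hphid2, Category.assoc, hkQ2, hM1q2]
  have isLim1 : IsLimit (PullbackCone.mk pg2 Map1 hsq1) := by
    refine PullbackCone.IsLimit.mk hsq1 (fun s => ?_) (fun s => ?_) (fun s => ?_)
      (fun s m hm1 hm2 => ?_)
    · refine pullback.lift (s.snd ≫ q1) s.fst ?_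
      have hc := congrArg (fun z => z ≫ pullback.fst f.f0 H.d) s.condition
      simp only [Category.assoc, hphid1, hkQ1] at hc
      rw [Category.assoc]
      exact hc.symm
    · exact pullback.lift_snd _ _ _
    · apply pullback.hom_ext
      · rw [Category.assoc, hM1q1, pullback.lift_fst]
      · rw [Category.assoc, hM1q2, ← Category.assoc, pullback.lift_snd]
        have hc := congrArg (fun z => z ≫ pullback.snd f.f0 H.d) s.condition
        simp only [Category.assoc, hphid2, hkQ2] at hc
        exact hc
    · apply pullback.hom_ext
      · rw [pullback.lift_fst]
        show m ≫ pg1 = s.snd ≫ q1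
        rw [← hM1q1, ← Category.assoc, hm2]
      · rw [pullback.lift_snd]; exact hm1
  obtain ⟨reM1⟩ := RegularCat.regEpiStable phid kQ pg2 Map1 hsq1 ⟨isLim1⟩ ⟨rephid⟩
  haveI := reM1
  haveI := RegularEpi.epi _ reM1
  -- the composition on G
  set mG : pullback G.c G.d ⟶ G.C1 := S.comp pg1 pg2 condPG with hmGdef
  have mGnat : ∀ {W : C} (z : W ⟶ pullback G.c G.d),
      z ≫ mG = S.comp (z ≫ pg1) (z ≫ pg2) (natcond z condPG) :=
    fun z => S.comp_natural z pg1 pg2 condPG (natcond z condPG)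
  -- first descent
  have compat1 : ∀ {W : C} (g1 g2 : W ⟶ pullback G.c G.d), g1 ≫ Map1 = g2 ≫ Map1 →
      g1 ≫ (mG ≫ f.f1) = g2 ≫ (mG ≫ f.f1) := by
    intro W g1 g2 hgg
    have hA : g1 ≫ pg1 = g2 ≫ pg1 := by
      rw [← hM1q1, ← Category.assoc, ← Category.assoc, hgg]
    have hB : g1 ≫ pg2 ≫ f.f1 = g2 ≫ pg2 ≫ f.f1 := by
      rw [← hM1q2, ← Category.assoc, ← Category.assoc, hgg]
    rw [← Category.assoc, ← Category.assoc, mGnat g1, mGnat g2]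
    exact star S f hS _ _ _ _ _ _
      (by rw [hA]) (by simpa only [Category.assoc] using hB)
  obtain ⟨u', hu'⟩ := descExists Map1 reM1 (mG ≫ f.f1) compat1
  -- second descent
  have compat2 : ∀ {W : C} (z1 z2 : W ⟶ pullback (G.c ≫ f.f0) H.d),
      z1 ≫ Map2 = z2 ≫ Map2 → z1 ≫ u' = z2 ≫ u' := by
    intro W z1 z2 hzz
    have hz1 : z1 ≫ q1 ≫ f.f1 = z2 ≫ q1 ≫ f.f1 := by
      rw [← hM2p1, ← Category.assoc, ← Category.assoc, hzz]
    have hz2 : z1 ≫ q2 = z2 ≫ q2 := by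
      rw [← hM2p2, ← Category.assoc, ← Category.assoc, hzz]
    obtain ⟨rc1⟩ := RegularCat.regEpiStable Map1 z1 (pullback.fst Map1 z1)
      (pullback.snd Map1 z1) pullback.condition ⟨pullbackIsPullback Map1 z1⟩ ⟨reM1⟩
    haveI := rc1
    haveI := RegularEpi.epi _ rc1
    set a1 := pullback.fst Map1 z1 with ha1def
    set b1 := pullback.snd Map1 z1 with hb1def
    have hA' : a1 ≫ Map1 = b1 ≫ z1 := pullback.condition
    obtain ⟨rc2⟩ := RegularCat.regEpiStable Map1 (b1 ≫ z2) (pullback.fst Map1 (b1 ≫ z2))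
      (pullback.snd Map1 (b1 ≫ z2)) pullback.condition
      ⟨pullbackIsPullback Map1 (b1 ≫ z2)⟩ ⟨reM1⟩
    haveI := rc2
    haveI := RegularEpi.epi _ rc2
    set a2 := pullback.fst Map1 (b1 ≫ z2) with ha2def
    set b2 := pullback.snd Map1 (b1 ≫ z2) with hb2def
    have hB' : a2 ≫ Map1 = b2 ≫ b1 ≫ z2 := pullback.condition
    have hA : (b2 ≫ a1) ≫ Map1 = (b2 ≫ b1) ≫ z1 := by
      rw [Category.assoc, hA', ← Category.assoc]
    have hB2 : a2 ≫ Map1 = (b2 ≫ b1) ≫ z2 := by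
      rw [hB', ← Category.assoc]
    have sA : ((b2 ≫ a1) ≫ pg1) ≫ f.f1 = (a2 ≫ pg1) ≫ f.f1 := by
      calc ((b2 ≫ a1) ≫ pg1) ≫ f.f1
          = ((b2 ≫ a1) ≫ Map1) ≫ (q1 ≫ f.f1) := by
            rw [← hM1q1]; simp only [Category.assoc]
        _ = ((b2 ≫ b1) ≫ z1) ≫ (q1 ≫ f.f1) := by rw [hA]
        _ = ((b2 ≫ b1) ≫ z2) ≫ (q1 ≫ f.f1) := by
            simp only [Category.assoc]; rw [hz1]
        _ = (a2 ≫ Map1) ≫ (q1 ≫ f.f1) := by rw [hB2]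
        _ = (a2 ≫ pg1) ≫ f.f1 := by
            rw [← hM1q1]; simp only [Category.assoc]
    have tA : ((b2 ≫ a1) ≫ pg2) ≫ f.f1 = (a2 ≫ pg2) ≫ f.f1 := by
      calc ((b2 ≫ a1) ≫ pg2) ≫ f.f1
          = ((b2 ≫ a1) ≫ Map1) ≫ q2 := by
            simp only [Category.assoc]; rw [← hM1q2]
        _ = ((b2 ≫ b1) ≫ z1) ≫ q2 := by rw [hA]
        _ = ((b2 ≫ b1) ≫ z2) ≫ q2 := by
            simp only [Category.assoc]; rw [hz2]
        _ = (a2 ≫ Map1) ≫ q2 := by rw [hB2]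
        _ = (a2 ≫ pg2) ≫ f.f1 := by
            simp only [Category.assoc]; rw [← hM1q2]
    have hstar := star S f hS ((b2 ≫ a1) ≫ pg1) ((b2 ≫ a1) ≫ pg2) (a2 ≫ pg1) (a2 ≫ pg2)
      (natcond (b2 ≫ a1) condPG) (natcond a2 condPG) sA tA
    have h5 : (b2 ≫ a1) ≫ mG ≫ f.f1 = a2 ≫ mG ≫ f.f1 := by
      rw [← Category.assoc, mGnat (b2 ≫ a1), ← Category.assoc, mGnat a2]
      exact hstar
    have h6 : (b2 ≫ b1) ≫ z1 ≫ u' = (b2 ≫ b1) ≫ z2 ≫ u' :=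
      calc (b2 ≫ b1) ≫ z1 ≫ u' = (b2 ≫ a1) ≫ Map1 ≫ u' := by
            rw [← Category.assoc, ← hA, Category.assoc]
        _ = (b2 ≫ a1) ≫ mG ≫ f.f1 := by rw [hu']
        _ = a2 ≫ mG ≫ f.f1 := h5
        _ = a2 ≫ Map1 ≫ u' := by rw [hu']
        _ = (b2 ≫ b1) ≫ z2 ≫ u' := by
            rw [← Category.assoc, hB']
            simp only [Category.assoc]
    have h7 := h6
    simp only [Category.assoc] at h7
    exact (cancel_epi b1).1 ((cancel_epi b2).1 h7)
  obtain ⟨mH, hmH⟩ := descExists Map2 reM2 u' compat2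
  -- chains
  have echain1 : Map1 ≫ Map2 ≫ ph1 = pg1 ≫ f.f1 := by
    rw [hM2p1, ← Category.assoc, hM1q1]
  have echain2 : Map1 ≫ Map2 ≫ ph2 = pg2 ≫ f.f1 := by
    rw [hM2p2, hM1q2]
  -- the master equation
  have master : ∀ {W : C} (x y : W ⟶ G.C1) (hxy : x ≫ G.c = y ≫ G.d)
      (h' : (x ≫ f.f1) ≫ H.c = (y ≫ f.f1) ≫ H.d),
      pullback.lift (x ≫ f.f1) (y ≫ f.f1) h' ≫ mH = S.comp x y hxy ≫ f.f1 := by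
    intro W x y hxy h'
    have hl : pullback.lift x y hxy ≫ (Map1 ≫ Map2)
        = pullback.lift (x ≫ f.f1) (y ≫ f.f1) h' := by
      apply pullback.hom_ext
      · rw [pullback.lift_fst, Category.assoc, Category.assoc, echain1,
          ← Category.assoc, pullback.lift_fst]
      · rw [pullback.lift_snd, Category.assoc, Category.assoc, echain2,
          ← Category.assoc, pullback.lift_snd]
    calc pullback.lift (x ≫ f.f1) (y ≫ f.f1) h' ≫ mH
        = (pullback.lift x y hxy ≫ (Map1 ≫ Map2)) ≫ mH := by rw [hl]
      _ = pullback.lift x y hxy ≫ mG ≫ f.f1 := by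
          simp only [Category.assoc]
          rw [hmH, hu']
      _ = S.comp x y hxy ≫ f.f1 := by
          rw [← Category.assoc, mGnat (pullback.lift x y hxy)]
          exact congrArg (· ≫ f.f1)
            (comp_congr S (pullback.lift_fst _ _ _) (pullback.lift_snd _ _ _) _ hxy)
  -- naturality of the composition candidate
  have Tnat : ∀ {W Z' : C} (w : W ⟶ Z') (a b : Z' ⟶ H.C1) (h : a ≫ H.c = b ≫ H.d)
      (h' : (w ≫ a) ≫ H.c = (w ≫ b) ≫ H.d),
      w ≫ (pullback.lift a b h ≫ mH) = pullback.lift (w ≫ a) (w ≫ b) h' ≫ mH := by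
    intro W Z' w a b h h'
    rw [← Category.assoc]
    congr 1
    apply pullback.hom_ext
    · rw [Category.assoc, pullback.lift_fst, pullback.lift_fst]
    · rw [Category.assoc, pullback.lift_snd, pullback.lift_snd]
  -- source and target of the composition
  have hmGd : mG ≫ G.d = pg1 ≫ G.d := S.comp_d pg1 pg2 condPG
  have hmGc : mG ≫ G.c = pg2 ≫ G.c := S.comp_c pg1 pg2 condPG
  have TmHd : mH ≫ H.d = ph1 ≫ H.d := by
    have hLHS : Map1 ≫ Map2 ≫ mH ≫ H.d = pg1 ≫ G.d ≫ f.f0 := by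
      rw [← Category.assoc Map2 mH H.d, hmH, ← Category.assoc Map1 u' H.d, hu',
        Category.assoc, f.hd, ← Category.assoc, hmGd, Category.assoc]
    have hRHS : Map1 ≫ Map2 ≫ ph1 ≫ H.d = pg1 ≫ G.d ≫ f.f0 := by
      rw [← Category.assoc Map2 ph1 H.d, hM2p1]
      simp only [Category.assoc]
      rw [f.hd, ← Category.assoc, hM1q1]
    apply (cancel_epi Map2).1
    apply (cancel_epi Map1).1
    rw [show Map1 ≫ Map2 ≫ mH ≫ H.d = Map1 ≫ Map2 ≫ mH ≫ H.d from rfl]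
    exact hLHS.trans hRHS.symm
  have TmHc : mH ≫ H.c = ph2 ≫ H.c := by
    have hLHS : Map1 ≫ Map2 ≫ mH ≫ H.c = pg2 ≫ G.c ≫ f.f0 := by
      rw [← Category.assoc Map2 mH H.c, hmH, ← Category.assoc Map1 u' H.c, hu',
        Category.assoc, f.hc, ← Category.assoc, hmGc, Category.assoc]
    have hRHS : Map1 ≫ Map2 ≫ ph2 ≫ H.c = pg2 ≫ G.c ≫ f.f0 := by
      rw [← Category.assoc Map2 ph2 H.c, hM2p2, ← Category.assoc Map1 q2 H.c, hM1q2,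
        Category.assoc, f.hc]
    apply (cancel_epi Map2).1
    apply (cancel_epi Map1).1
    exact hLHS.trans hRHS.symm
  have Td : ∀ {Z : C} (a b : Z ⟶ H.C1) (h : a ≫ H.c = b ≫ H.d),
      (pullback.lift a b h ≫ mH) ≫ H.d = a ≫ H.d := by
    intro Z a b h
    rw [Category.assoc, TmHd, ← Category.assoc, pullback.lift_fst]
  have Tc : ∀ {Z : C} (a b : Z ⟶ H.C1) (h : a ≫ H.c = b ≫ H.d),
      (pullback.lift a b h ≫ mH) ≫ H.c = b ≫ H.c := by
    intro Z a b h
    rw [Category.assoc, TmHc, ← Category.assoc, pullback.lift_snd]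
  -- unit laws
  have Tul : ∀ {Z : C} (a : Z ⟶ H.C1) (h : (a ≫ H.d ≫ H.e) ≫ H.c = a ≫ H.d),
      pullback.lift (a ≫ H.d ≫ H.e) a h ≫ mH = a := by
    intro Z a h
    obtain ⟨reρ⟩ := RegularCat.regEpiStable f.f1 a (pullback.fst f.f1 a)
      (pullback.snd f.f1 a) pullback.condition ⟨pullbackIsPullback f.f1 a⟩ ⟨re1⟩
    haveI := reρ
    haveI := RegularEpi.epi _ reρ
    set g := pullback.fst f.f1 a with hgdef
    set ρ := pullback.snd f.f1 a with hρdef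
    have hga : g ≫ f.f1 = ρ ≫ a := pullback.condition
    have hGcomp : (g ≫ G.d ≫ G.e) ≫ G.c = g ≫ G.d := by
      simp only [Category.assoc, G.ec, Category.comp_id]
    apply (cancel_epi ρ).1
    rw [Tnat ρ _ _ h (natcond ρ h)]
    have hlift : pullback.lift (ρ ≫ a ≫ H.d ≫ H.e) (ρ ≫ a) (natcond ρ h)
        = pullback.lift ((g ≫ G.d ≫ G.e) ≫ f.f1) (g ≫ f.f1) (rgcond f hGcomp) := by
      apply lift_congr _ hga.symm
      rw [show (g ≫ G.d ≫ G.e) ≫ f.f1 = g ≫ G.d ≫ G.e ≫ f.f1 by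
          simp only [Category.assoc], rg_de f, ← Category.assoc g f.f1, hga]
      simp only [Category.assoc]
    rw [hlift, master _ _ hGcomp _, S.comp_unit_l g hGcomp, hga]
  have Tur : ∀ {Z : C} (a : Z ⟶ H.C1) (h : a ≫ H.c = (a ≫ H.c ≫ H.e) ≫ H.d),
      pullback.lift a (a ≫ H.c ≫ H.e) h ≫ mH = a := by
    intro Z a h
    obtain ⟨reρ⟩ := RegularCat.regEpiStable f.f1 a (pullback.fst f.f1 a)
      (pullback.snd f.f1 a) pullback.condition ⟨pullbackIsPullback f.f1 a⟩ ⟨re1⟩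
    haveI := reρ
    haveI := RegularEpi.epi _ reρ
    set g := pullback.fst f.f1 a with hgdef
    set ρ := pullback.snd f.f1 a with hρdef
    have hga : g ≫ f.f1 = ρ ≫ a := pullback.condition
    have hGcomp : g ≫ G.c = (g ≫ G.c ≫ G.e) ≫ G.d := by
      simp only [Category.assoc, G.ed, Category.comp_id]
    apply (cancel_epi ρ).1
    rw [Tnat ρ _ _ h (natcond ρ h)]
    have hlift : pullback.lift (ρ ≫ a) (ρ ≫ a ≫ H.c ≫ H.e) (natcond ρ h)
        = pullback.lift (g ≫ f.f1) ((g ≫ G.c ≫ G.e) ≫ f.f1) (rgcond f hGcomp) := by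
      apply lift_congr hga.symm
      rw [show (g ≫ G.c ≫ G.e) ≫ f.f1 = g ≫ G.c ≫ G.e ≫ f.f1 by
          simp only [Category.assoc], rg_ce f, ← Category.assoc g f.f1, hga]
      simp only [Category.assoc]
    rw [hlift, master _ _ hGcomp _, S.comp_unit_r g hGcomp, hga]
  -- associativity
  have Tassoc : ∀ {Z : C} (a b c' : Z ⟶ H.C1) (h1 : a ≫ H.c = b ≫ H.d)
      (h2 : b ≫ H.c = c' ≫ H.d)
      (h3 : (pullback.lift a b h1 ≫ mH) ≫ H.c = c' ≫ H.d)
      (h4 : a ≫ H.c = (pullback.lift b c' h2 ≫ mH) ≫ H.d),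
      pullback.lift (pullback.lift a b h1 ≫ mH) c' h3 ≫ mH
        = pullback.lift a (pullback.lift b c' h2 ≫ mH) h4 ≫ mH := by
    intro Z a b c' h1 h2 h3 h4
    obtain ⟨rc2⟩ := RegularCat.regEpiStable Map2 (pullback.lift b c' h2)
      (pullback.fst Map2 (pullback.lift b c' h2)) (pullback.snd Map2 (pullback.lift b c' h2))
      pullback.condition ⟨pullbackIsPullback Map2 (pullback.lift b c' h2)⟩ ⟨reM2⟩
    haveI := rc2
    haveI := RegularEpi.epi _ rc2
    set l2 := pullback.fst Map2 (pullback.lift b c' h2) with hl2def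
    set ρ2 := pullback.snd Map2 (pullback.lift b c' h2) with hρ2def
    have hl2 : l2 ≫ Map2 = ρ2 ≫ pullback.lift b c' h2 := pullback.condition (f := Map2)
    obtain ⟨rc1⟩ := RegularCat.regEpiStable Map1 l2 (pullback.fst Map1 l2)
      (pullback.snd Map1 l2) pullback.condition ⟨pullbackIsPullback Map1 l2⟩ ⟨reM1⟩
    haveI := rc1
    haveI := RegularEpi.epi _ rc1
    set l1 := pullback.fst Map1 l2 with hl1def
    set ρ1 := pullback.snd Map1 l2 with hρ1def
    have hl1 : l1 ≫ Map1 = ρ1 ≫ l2 := pullback.condition (f := Map1) (g := l2)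
    have hq : l1 ≫ Map1 ≫ Map2 = (ρ1 ≫ ρ2) ≫ pullback.lift b c' h2 := by
      rw [← Category.assoc, hl1, Category.assoc, hl2, ← Category.assoc]
    have E1 : l1 ≫ pg1 ≫ f.f1 = (ρ1 ≫ ρ2) ≫ b := by
      have h := congrArg (fun z => z ≫ ph1) hq
      simp only [Category.assoc] at h
      rw [echain1, pullback.lift_fst] at h
      rw [h]
      simp only [Category.assoc]
    have E2 : l1 ≫ pg2 ≫ f.f1 = (ρ1 ≫ ρ2) ≫ c' := by
      have h := congrArg (fun z => z ≫ ph2) hq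
      simp only [Category.assoc] at h
      rw [echain2, pullback.lift_snd] at h
      rw [h]
      simp only [Category.assoc]
    -- the lift of a along phic
    have condψ : ((l1 ≫ pg1) ≫ G.d) ≫ f.f0 = ((ρ1 ≫ ρ2) ≫ a) ≫ H.c := by
      have e := congrArg (fun z => z ≫ H.d) E1
      simp only [Category.assoc] at e ⊢
      rw [← f.hd, e, ← h1]
    set ψ := pullback.lift ((l1 ≫ pg1) ≫ G.d) ((ρ1 ≫ ρ2) ≫ a) condψ with hψdef
    obtain ⟨rc0⟩ := RegularCat.regEpiStable phic ψ (pullback.fst phic ψ)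
      (pullback.snd phic ψ) pullback.condition ⟨pullbackIsPullback phic ψ⟩ ⟨rephic⟩
    haveI := rc0
    haveI := RegularEpi.epi _ rc0
    set ga := pullback.fst phic ψ with hgadef
    set ρ0 := pullback.snd phic ψ with hρ0def
    have hgaψ : ga ≫ phic = ρ0 ≫ ψ := pullback.condition (f := phic) (g := ψ)
    have hψ1 : ψ ≫ pullback.fst f.f0 H.c = (l1 ≫ pg1) ≫ G.d := pullback.lift_fst _ _ _
    have hψ2 : ψ ≫ pullback.snd f.f0 H.c = (ρ1 ≫ ρ2) ≫ a := pullback.lift_snd _ _ _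
    have hgac : ga ≫ G.c = ρ0 ≫ (l1 ≫ pg1) ≫ G.d := by
      have h := congrArg (fun z => z ≫ pullback.fst f.f0 H.c) hgaψ
      simp only [Category.assoc, hphic1] at h
      rw [h, hψ1]
    have hgaf : ga ≫ f.f1 = ρ0 ≫ (ρ1 ≫ ρ2) ≫ a := by
      have h := congrArg (fun z => z ≫ pullback.snd f.f0 H.c) hgaψ
      simp only [Category.assoc, hphic2] at h
      rw [h, hψ2]
    set gB : _ ⟶ G.C1 := ρ0 ≫ l1 ≫ pg1 with hgBdef
    set gC : _ ⟶ G.C1 := ρ0 ≫ l1 ≫ pg2 with hgCdef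
    have hA1 : ga ≫ f.f1 = (ρ0 ≫ ρ1 ≫ ρ2) ≫ a := by
      rw [hgaf]; simp only [Category.assoc]
    have hB1 : gB ≫ f.f1 = (ρ0 ≫ ρ1 ≫ ρ2) ≫ b := by
      rw [hgBdef]
      simp only [Category.assoc]
      rw [← Category.assoc l1 pg1 f.f1,
        show (l1 ≫ pg1) ≫ f.f1 = l1 ≫ pg1 ≫ f.f1 from Category.assoc _ _ _, E1]
      simp only [Category.assoc]
    have hC1 : gC ≫ f.f1 = (ρ0 ≫ ρ1 ≫ ρ2) ≫ c' := by
      rw [hgCdef]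
      simp only [Category.assoc]
      rw [← Category.assoc l1 pg2 f.f1,
        show (l1 ≫ pg2) ≫ f.f1 = l1 ≫ pg2 ≫ f.f1 from Category.assoc _ _ _, E2]
      simp only [Category.assoc]
    have hAB : ga ≫ G.c = gB ≫ G.d := by
      rw [hgac, hgBdef]
      simp only [Category.assoc]
    have hBC : gB ≫ G.c = gC ≫ G.d := by
      rw [hgBdef, hgCdef]
      simp only [Category.assoc]
      rw [condPG]
    have hc3 : S.comp ga gB hAB ≫ G.c = gC ≫ G.d := by
      rw [S.comp_c]; exact hBC
    have hc4 : ga ≫ G.c = S.comp gB gC hBC ≫ G.d := by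
      rw [S.comp_d]; exact hAB
    apply (cancel_epi (ρ0 ≫ ρ1 ≫ ρ2)).1
    have L1 : (ρ0 ≫ ρ1 ≫ ρ2) ≫ (pullback.lift a b h1 ≫ mH) = S.comp ga gB hAB ≫ f.f1 := by
      rw [Tnat (ρ0 ≫ ρ1 ≫ ρ2) a b h1 (natcond _ h1),
        lift_congr hA1.symm hB1.symm (natcond _ h1) (rgcond f hAB)]
      exact master ga gB hAB _
    have R1 : (ρ0 ≫ ρ1 ≫ ρ2) ≫ (pullback.lift b c' h2 ≫ mH) = S.comp gB gC hBC ≫ f.f1 := by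
      rw [Tnat (ρ0 ≫ ρ1 ≫ ρ2) b c' h2 (natcond _ h2),
        lift_congr hB1.symm hC1.symm (natcond _ h2) (rgcond f hBC)]
      exact master gB gC hBC _
    calc (ρ0 ≫ ρ1 ≫ ρ2) ≫ (pullback.lift (pullback.lift a b h1 ≫ mH) c' h3 ≫ mH)
        = pullback.lift (S.comp ga gB hAB ≫ f.f1) (gC ≫ f.f1) (rgcond f hc3) ≫ mH := by
          rw [Tnat (ρ0 ≫ ρ1 ≫ ρ2) _ c' h3 (natcond _ h3),
            lift_congr L1 hC1.symm (natcond _ h3) (rgcond f hc3)]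
      _ = S.comp (S.comp ga gB hAB) gC hc3 ≫ f.f1 := master _ _ hc3 _
      _ = S.comp ga (S.comp gB gC hBC) hc4 ≫ f.f1 :=
          congrArg (· ≫ f.f1) (S.comp_assoc ga gB gC hAB hBC hc3 hc4)
      _ = pullback.lift (ga ≫ f.f1) (S.comp gB gC hBC ≫ f.f1) (rgcond f hc4) ≫ mH :=
          (master _ _ hc4 _).symm
      _ = (ρ0 ≫ ρ1 ≫ ρ2) ≫ (pullback.lift a (pullback.lift b c' h2 ≫ mH) h4 ≫ mH) := by
          rw [Tnat (ρ0 ≫ ρ1 ≫ ρ2) a _ h4 (natcond _ h4),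
            lift_congr hA1.symm R1 (natcond _ h4) (rgcond f hc4)]
  -- assemble the category structure on H
  refine ⟨⟨fun {Z} a b h => pullback.lift a b h ≫ mH,
      fun {W Z'} w a b h h' => Tnat w a b h h',
      fun {Z} a b h => Td a b h,
      fun {Z} a b h => Tc a b h,
      fun {Z} a h => Tul a h,
      fun {Z} a h => Tur a h,
      fun {Z} a b c' h1 h2 h3 h4 => Tassoc a b c' h1 h2 h3 h4⟩, ?_⟩
  exact inverses S f hS re1 _ (fun {Z} x y h h' => master x y h h')
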